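/- (Supply Lemma) Let I be an AVA instance and let I' be the instance obtained from I by making k copies of every item (same values and thresholds). Then OPT(I') ≤ O(k²)·OPT(I). Concretely, OPT(I') ≤ 2k²·OPT(I): given an optimal bundling-based allocation for I' (which 2-approximates OPT(I')), independently associating each original item uniformly with one of its k copies and keeping only bundles whose surviving items are exactly as allocated yields a feasible allocation for I with expected value at least (1/k²) times the value of the bundling-based allocation. -/

import Mathlib

variable {I J : Type*} [Fintype I] [Fintype J] [DecidableEq I] [DecidableEq J]

/-- Feasibility of an allocation for an AVA instance with item set `α`,
values `w : α → J → ℝ` and thresholds `ρ`. -/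
def FeasibleOn {α : Type*} [Fintype α] [DecidableEq α]
    (w : α → J → ℝ) (ρ : J → ℝ) (x : α → Option J) : Prop :=
  ∀ j : J, ρ j * ((Finset.univ.filter fun a => x a = some j).card : ℝ) ≤
    ∑ a ∈ Finset.univ.filter fun a => x a = some j, w a j

/-- Total value of an allocation. -/
def valueOn {α : Type*} [Fintype α] (w : α → J → ℝ) (x : α → Option J) : ℝ :=
  ∑ a, ((x a).map (w a)).getD 0

open Finset

section assign
variable {S : Type*} [DecidableEq S]
set_option linter.unusedSectionVars false in

lemma assign_lemma (w : S → ℝ) (ρ : ℝ) (hρ : 0 ≤ ρ) (P : Finset S) :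
    ∀ N : Finset S, Disjoint P N → (∀ s ∈ N, w s < ρ) → (∀ p ∈ P, ρ ≤ w p) →
    (∑ s ∈ N, (ρ - w s)) ≤ ∑ p ∈ P, (w p - ρ) →
    ∃ g : S → Option S,
      (∀ s p, g s = some p → s ∈ N ∧ p ∈ P) ∧
      (∀ p ∈ P, ∑ s ∈ N.filter (fun s => g s = some p), (ρ - w s) ≤ w p - ρ) ∧
      (∑ s ∈ N.filter (fun s => g s = none), w s ≤ ∑ p ∈ P, w p) := by
  induction P using Finset.strongInduction with
  | _ P ih =>
    intro N hdisj hN hP hbal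
    rcases P.eq_empty_or_nonempty with rfl | ⟨p, hp⟩
    · -- N must be empty
      have hNe : N = ∅ := by
        by_contra h
        obtain ⟨n, hn⟩ := Finset.nonempty_iff_ne_empty.2 h
        have : (0:ℝ) < ∑ s ∈ N, (ρ - w s) :=
          Finset.sum_pos (fun s hs => by linarith [hN s hs]) ⟨n, hn⟩
        simp only [Finset.sum_empty] at hbal
        linarith
      refine ⟨fun _ => none, ?_, ?_, ?_⟩
      · intro s q h; simp at h
      · intro q hq; simp at hq
      · subst hNe; simp
    · by_cases h1 : ∑ s ∈ N, (ρ - w s) ≤ w p - ρ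
      · refine ⟨fun s => if s ∈ N then some p else none, ?_, ?_, ?_⟩
        · intro s q h
          by_cases hs : s ∈ N
          · simp only [hs, if_pos] at h
            exact ⟨hs, by rw [← Option.some_inj.1 h]; exact hp⟩
          · simp [hs] at h
        · intro q hq
          by_cases hqp : q = p
          · subst hqp
            have heq : N.filter (fun s => (if s ∈ N then some q else none) = some q) = N := by
              apply Finset.filter_true_of_mem
              intro s hs; simp [hs]
            rw [heq]; exact h1
          · have heq : N.filter (fun s => (if s ∈ N then some p else none) = some q) = ∅ := by
              apply Finset.filter_eq_empty_iff.2
              intro s hs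
              simp only [hs, if_pos]
              intro hc
              exact hqp (Option.some_inj.1 hc).symm
            rw [heq]; simp only [Finset.sum_empty]; linarith [hP q hq]
        · have heq : N.filter (fun s => (if s ∈ N then some p else none) = none) = ∅ := by
            apply Finset.filter_eq_empty_iff.2
            intro s hs; simp [hs]
          rw [heq]
          simp only [Finset.sum_empty]
          exact Finset.sum_nonneg (fun q hq => le_trans hρ (hP q hq))
      · -- find maximal M ⊆ N fitting into p
        have hfam : (N.powerset.filter (fun T => ∑ s ∈ T, (ρ - w s) ≤ w p - ρ)).Nonempty := by
          refine ⟨∅, ?_⟩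
          simp only [Finset.mem_filter, Finset.mem_powerset]
          exact ⟨Finset.empty_subset _, by simp; linarith [hP p hp]⟩
        obtain ⟨M, hMmem, hMmax⟩ := Finset.exists_maximal hfam
        rw [Finset.mem_filter, Finset.mem_powerset] at hMmem
        obtain ⟨hMN, hMfit⟩ := hMmem
        have hMne : M ≠ N := by
          intro h; subst h; exact h1 hMfit
        obtain ⟨n, hnN, hnM⟩ := Finset.exists_of_ssubset (lt_of_le_of_ne hMN hMne)
        have hover : w p - ρ < ∑ s ∈ insert n M, (ρ - w s) := by
          by_contra h
          push_neg at h
          have hmem : insert n M ∈ N.powerset.filter (fun T => ∑ s ∈ T, (ρ - w s) ≤ w p - ρ) := by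
            rw [Finset.mem_filter, Finset.mem_powerset]
            exact ⟨Finset.insert_subset hnN hMN, h⟩
          exact lt_irrefl _ (lt_of_lt_of_le (Finset.ssubset_insert hnM) (hMmax hmem (Finset.ssubset_insert hnM).le))
        rw [Finset.sum_insert hnM] at hover
        -- recurse
        set N' := (N \ M).erase n with hN'def
        have hN'N : N' ⊆ N := (Finset.erase_subset _ _).trans (Finset.sdiff_subset)
        have hsplit : ∑ s ∈ N, (ρ - w s) = ∑ s ∈ M, (ρ - w s) + ((ρ - w n) + ∑ s ∈ N', (ρ - w s)) := by
          have hA : ∑ s ∈ N \ M, (ρ - w s) + ∑ s ∈ M, (ρ - w s) = ∑ s ∈ N, (ρ - w s) :=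
            Finset.sum_sdiff hMN
          have hB : ∑ s ∈ (N \ M).erase n, (ρ - w s) + (ρ - w n) = ∑ s ∈ N \ M, (ρ - w s) :=
            Finset.sum_erase_add (N \ M) _ (Finset.mem_sdiff.2 ⟨hnN, hnM⟩)
          rw [hN'def]
          linarith
        have hbal' : ∑ s ∈ N', (ρ - w s) ≤ ∑ q ∈ P.erase p, (w q - ρ) := by
          have h2 : ∑ q ∈ P.erase p, (w q - ρ) = ∑ q ∈ P, (w q - ρ) - (w p - ρ) := by
            rw [← Finset.sum_erase_add P _ hp]; ring
          have hM0 : 0 ≤ ∑ s ∈ M, (ρ - w s) :=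
            Finset.sum_nonneg (fun s hs => by linarith [hN s (hMN hs)])
          rw [h2]
          linarith [hbal, hsplit, hover]
        obtain ⟨g', hg'a, hg'b, hg'c⟩ := ih (P.erase p) (Finset.erase_ssubset hp) N'
          (hdisj.mono (Finset.erase_subset _ _) hN'N)
          (fun s hs => hN s (hN'N hs)) (fun q hq => hP q (Finset.mem_of_mem_erase hq)) hbal'
        refine ⟨fun s => if s ∈ M then some p else if s = n then none else g' s, ?_, ?_, ?_⟩
        · intro s q h
          replace h : (if s ∈ M then some p else if s = n then none else g' s) = some q := h
          by_cases hsM : s ∈ M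
          · simp only [hsM, if_pos] at h
            exact ⟨hMN hsM, (Option.some_inj.1 h) ▸ hp⟩
          · by_cases hsn : s = n
            · rw [if_neg hsM, if_pos hsn] at h; cases h
            · rw [if_neg hsM, if_neg hsn] at h
              obtain ⟨h1', h2'⟩ := hg'a s q h
              exact ⟨hN'N h1', Finset.mem_of_mem_erase h2'⟩
        · intro q hq
          by_cases hqp : q = p
          · subst hqp
            have heq : N.filter (fun s => (if s ∈ M then some q else if s = n then none else g' s) = some q) = M := by
              ext s
              simp only [Finset.mem_filter]
              constructor
              · rintro ⟨hsN, hs⟩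
                by_cases hsM : s ∈ M
                · exact hsM
                · exfalso
                  by_cases hsn : s = n
                  · rw [if_neg hsM, if_pos hsn] at hs; cases hs
                  · rw [if_neg hsM, if_neg hsn] at hs
                    have := (hg'a s q hs).2
                    exact (Finset.notMem_erase q P) this
              · intro hsM
                exact ⟨hMN hsM, by simp [hsM]⟩
            rw [heq]; exact hMfit
          · have hq' : q ∈ P.erase p := Finset.mem_erase.2 ⟨hqp, hq⟩
            have heq : N.filter (fun s => (if s ∈ M then some p else if s = n then none else g' s) = some q)
                = N'.filter (fun s => g' s = some q) := by
              ext s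
              simp only [Finset.mem_filter]
              constructor
              · rintro ⟨hsN, hs⟩
                by_cases hsM : s ∈ M
                · exfalso; simp only [hsM, if_pos] at hs
                  exact hqp (Option.some_inj.1 hs).symm
                · by_cases hsn : s = n
                  · rw [if_neg hsM, if_pos hsn] at hs; cases hs
                  · rw [if_neg hsM, if_neg hsn] at hs
                    exact ⟨Finset.mem_erase.2 ⟨hsn, Finset.mem_sdiff.2 ⟨hsN, hsM⟩⟩, hs⟩
              · rintro ⟨hsN', hs⟩
                have hsM : s ∉ M := fun h => (Finset.mem_sdiff.1 (Finset.mem_of_mem_erase hsN')).2 h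
                have hsn : s ≠ n := Finset.ne_of_mem_erase hsN'
                exact ⟨hN'N hsN', by rw [if_neg hsM, if_neg hsn]; exact hs⟩
            rw [heq]
            exact hg'b q hq'
        · have heq : N.filter (fun s => (if s ∈ M then some p else if s = n then none else g' s) = none)
              = insert n (N'.filter (fun s => g' s = none)) := by
            ext s
            simp only [Finset.mem_filter, Finset.mem_insert]
            constructor
            · rintro ⟨hsN, hs⟩
              by_cases hsM : s ∈ M
              · simp [hsM] at hs
              · by_cases hsn : s = n
                · exact Or.inl hsn
                · rw [if_neg hsM, if_neg hsn] at hs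
                  exact Or.inr ⟨Finset.mem_erase.2 ⟨hsn, Finset.mem_sdiff.2 ⟨hsN, hsM⟩⟩, hs⟩
            · rintro (rfl | ⟨hsN', hs⟩)
              · exact ⟨hnN, by rw [if_neg hnM, if_pos rfl]⟩
              · have hsM : s ∉ M := fun h => (Finset.mem_sdiff.1 (Finset.mem_of_mem_erase hsN')).2 h
                have hsn : s ≠ n := Finset.ne_of_mem_erase hsN'
                exact ⟨hN'N hsN', by rw [if_neg hsM, if_neg hsn]; exact hs⟩
          rw [heq, Finset.sum_insert (by simp [hN'def])]
          have h3 : ∑ q ∈ P.erase p, w q + w p = ∑ q ∈ P, w q :=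
            Finset.sum_erase_add P _ hp
          have hn_le : w n ≤ w p := le_trans (le_of_lt (hN n hnN)) (hP p hp)
          linarith [hg'c]

end assign


section fibers
variable {I : Type*} [Fintype I] [DecidableEq I]



lemma fiber1_const (k : ℕ) (i : I) (c c' : Fin k) :
    (univ.filter fun f : I → Fin k => f i = c).card
      = (univ.filter fun f : I → Fin k => f i = c').card := by
  apply Finset.card_bij' (fun f _ => Function.update f i c') (fun f _ => Function.update f i c)
  · intro f hf
    simp only [Finset.mem_filter, Finset.mem_univ, true_and] at hf
    rw [Function.update_idem, ← hf, Function.update_eq_self]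
  · intro f hf
    simp only [Finset.mem_filter, Finset.mem_univ, true_and] at hf
    rw [Function.update_idem, ← hf, Function.update_eq_self]
  · intro f hf
    simp [Function.update_self]
  · intro f hf
    simp [Function.update_self]

lemma fiber1_card (k : ℕ) (i : I) (c : Fin k) :
    (univ.filter fun f : I → Fin k => f i = c).card * k = k ^ (Fintype.card I) := by
  have hU : (univ : Finset (I → Fin k))
      = (univ : Finset (Fin k)).biUnion (fun b => univ.filter fun f : I → Fin k => f i = b) := by
    ext f; simp
  have h : (univ : Finset (I → Fin k)).card
      = ∑ b : Fin k, (univ.filter fun f : I → Fin k => f i = b).card := by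
    conv_lhs => rw [hU]
    apply Finset.card_biUnion
    intro x _ y _ hxy
    rw [Function.onFun, Finset.disjoint_left]
    intro f hf hf'
    simp only [Finset.mem_filter] at hf hf'
    exact hxy (hf.2 ▸ hf'.2 ▸ rfl)
  calc (univ.filter fun f : I → Fin k => f i = c).card * k
      = ∑ b : Fin k, (univ.filter fun f : I → Fin k => f i = b).card := by
        rw [Finset.sum_congr rfl (fun b _ => fiber1_const k i b c)]
        simp [Finset.sum_const, Finset.card_univ, mul_comm]
    _ = (univ : Finset (I → Fin k)).card := h.symm
    _ = k ^ Fintype.card I := by rw [Finset.card_univ, Fintype.card_fun, Fintype.card_fin]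

lemma fiber2_const (k : ℕ) (i i' : I) (hne : i ≠ i') (c c' d d' : Fin k) :
    (univ.filter fun f : I → Fin k => f i = c ∧ f i' = c').card
      = (univ.filter fun f : I → Fin k => f i = d ∧ f i' = d').card := by
  have hne' : i' ≠ i := hne.symm
  apply Finset.card_bij' (fun f _ => Function.update (Function.update f i d) i' d')
    (fun f _ => Function.update (Function.update f i c) i' c')
  · intro f hf
    simp only [Finset.mem_filter, Finset.mem_univ, true_and] at hf
    funext x
    rcases eq_or_ne x i' with rfl | hx'
    · rw [Function.update_self]; exact hf.2.symm
    · rw [Function.update_of_ne hx']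
      rcases eq_or_ne x i with rfl | hx
      · rw [Function.update_self]; exact hf.1.symm
      · rw [Function.update_of_ne hx, Function.update_of_ne hx', Function.update_of_ne hx]
  · intro f hf
    simp only [Finset.mem_filter, Finset.mem_univ, true_and] at hf
    funext x
    rcases eq_or_ne x i' with rfl | hx'
    · rw [Function.update_self]; exact hf.2.symm
    · rw [Function.update_of_ne hx']
      rcases eq_or_ne x i with rfl | hx
      · rw [Function.update_self]; exact hf.1.symm
      · rw [Function.update_of_ne hx, Function.update_of_ne hx', Function.update_of_ne hx]
  · intro f hf
    simp only [Finset.mem_filter, Finset.mem_univ, true_and]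
    exact ⟨by rw [Function.update_of_ne hne, Function.update_self], by rw [Function.update_self]⟩
  · intro f hf
    simp only [Finset.mem_filter, Finset.mem_univ, true_and]
    exact ⟨by rw [Function.update_of_ne hne, Function.update_self], by rw [Function.update_self]⟩

lemma fiber2_card (k : ℕ) (i i' : I) (hne : i ≠ i') (c c' : Fin k) :
    (univ.filter fun f : I → Fin k => f i = c ∧ f i' = c').card * (k * k)
      = k ^ (Fintype.card I) := by
  have hU : (univ : Finset (I → Fin k))
      = (univ : Finset (Fin k × Fin k)).biUnion
          (fun b => univ.filter fun f : I → Fin k => f i = b.1 ∧ f i' = b.2) := by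
    ext f
    constructor
    · intro _
      exact Finset.mem_biUnion.2 ⟨(f i, f i'), Finset.mem_univ _,
        Finset.mem_filter.2 ⟨Finset.mem_univ _, rfl, rfl⟩⟩
    · intro _; exact Finset.mem_univ _
  have h : (univ : Finset (I → Fin k)).card
      = ∑ b : Fin k × Fin k, (univ.filter fun f : I → Fin k => f i = b.1 ∧ f i' = b.2).card := by
    conv_lhs => rw [hU]
    apply Finset.card_biUnion
    intro x _ y _ hxy
    rw [Function.onFun, Finset.disjoint_left]
    intro f hf hf'
    simp only [Finset.mem_filter] at hf hf'
    exact hxy (by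
      rw [Prod.ext_iff]
      exact ⟨hf.2.1 ▸ hf'.2.1 ▸ rfl, hf.2.2 ▸ hf'.2.2 ▸ rfl⟩)
  calc (univ.filter fun f : I → Fin k => f i = c ∧ f i' = c').card * (k * k)
      = ∑ b : Fin k × Fin k,
          (univ.filter fun f : I → Fin k => f i = b.1 ∧ f i' = b.2).card := by
        rw [Finset.sum_congr rfl (fun b _ => fiber2_const k i i' hne b.1 b.2 c c')]
        simp only [Finset.sum_const, Finset.card_univ, smul_eq_mul]
        rw [Fintype.card_prod, Fintype.card_fin, mul_comm]
    _ = (univ : Finset (I → Fin k)).card := h.symm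
    _ = k ^ Fintype.card I := by rw [Finset.card_univ, Fintype.card_fun, Fintype.card_fin]

end fibers

section closure
variable {S : Type*} [Fintype S] [DecidableEq S]

/-- Feasibility of closed-under-anchors subsets of a bundled structure. -/
lemma closure_feas (w : S → ℝ) (r : ℝ) (b : S → Option S) (T : Finset S)
    (hanchor : ∀ s p, b s = some p → b p = some p)
    (hlow : ∀ s p, b s = some p → p ∈ T → s ≠ p → w s < r)
    (hbfeas : ∀ p ∈ T, b p = some p →
      r * ((univ.filter fun s => b s = some p).card : ℝ) ≤
        ∑ s ∈ univ.filter fun s => b s = some p, w s)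
    (hT : ∀ s ∈ T, ∃ p, b s = some p ∧ p ∈ T) :
    r * (T.card : ℝ) ≤ ∑ s ∈ T, w s := by
  classical
  set anchors := T.filter (fun p => b p = some p) with hanc
  have hpart : T = anchors.biUnion (fun p => T.filter (fun s => b s = some p)) := by
    apply Finset.Subset.antisymm
    · intro s hs
      obtain ⟨p, hbp, hpT⟩ := hT s hs
      refine Finset.mem_biUnion.2 ⟨p, ?_, ?_⟩
      · exact Finset.mem_filter.2 ⟨hpT, hanchor s p hbp⟩
      · exact Finset.mem_filter.2 ⟨hs, hbp⟩
    · intro s hs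
      obtain ⟨p, _, hsp⟩ := Finset.mem_biUnion.1 hs
      exact (Finset.mem_filter.1 hsp).1
  have hdisj : ∀ x ∈ anchors, ∀ y ∈ anchors, x ≠ y →
      Disjoint (T.filter (fun s => b s = some x)) (T.filter (fun s => b s = some y)) := by
    intro x _ y _ hxy
    rw [Finset.disjoint_left]
    intro s hs hs'
    exact hxy (Option.some_inj.1 ((Finset.mem_filter.1 hs).2 ▸ (Finset.mem_filter.1 hs').2))
  have hcard0 : T.card = ∑ p ∈ anchors, (T.filter (fun s => b s = some p)).card := by
    conv_lhs => rw [hpart]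
    exact Finset.card_biUnion hdisj
  have hcard : (T.card : ℝ) = ∑ p ∈ anchors, ((T.filter (fun s => b s = some p)).card : ℝ) := by
    rw [hcard0]; push_cast; rfl
  have hsum : ∑ s ∈ T, w s = ∑ p ∈ anchors, ∑ s ∈ T.filter (fun s => b s = some p), w s := by
    conv_lhs => rw [hpart]
    exact Finset.sum_biUnion (fun x hx y hy hxy => hdisj x hx y hy hxy)
  rw [hcard, hsum, Finset.mul_sum]
  apply Finset.sum_le_sum
  intro p hpanc
  obtain ⟨hpT, hbp⟩ := Finset.mem_filter.1 hpanc
  set U := T.filter (fun s => b s = some p) with hU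
  set B := univ.filter (fun s : S => b s = some p) with hB
  have hsub : U ⊆ B := fun s hs =>
    Finset.mem_filter.2 ⟨Finset.mem_univ _, (Finset.mem_filter.1 hs).2⟩
  have hpU : p ∈ U := Finset.mem_filter.2 ⟨hpT, hbp⟩
  have h1 : r * (B.card : ℝ) ≤ ∑ s ∈ B, w s := hbfeas p hpT hbp
  have h2 : ∑ s ∈ B \ U, w s ≤ r * ((B \ U).card : ℝ) := by
    rw [mul_comm]
    have := Finset.sum_le_card_nsmul (B \ U) w r ?_
    · simpa [nsmul_eq_mul] using this
    · intro s hs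
      obtain ⟨hsB, hsU⟩ := Finset.mem_sdiff.1 hs
      have hbs := (Finset.mem_filter.1 hsB).2
      have hsnp : s ≠ p := fun h => hsU (h ▸ hpU)
      exact le_of_lt (hlow s p hbs hpT hsnp)
  have h3 : ∑ s ∈ B \ U, w s + ∑ s ∈ U, w s = ∑ s ∈ B, w s := Finset.sum_sdiff hsub
  have h4 : ((B \ U).card : ℝ) = (B.card : ℝ) - (U.card : ℝ) := by
    rw [Finset.card_sdiff_of_subset hsub]
    exact Nat.cast_sub (Finset.card_le_card hsub)
  rw [h4, mul_sub] at h2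
  linarith
end closure

/-- Supply Lemma: duplicating every item `k` times increases the optimal
welfare by at most a factor `2k²`: every feasible allocation of the copied
instance is dominated, up to a `2k²` factor, by some feasible allocation of
the original instance. -/
theorem stmt_5 (v : I → J → ℝ) (ρ : J → ℝ)
    (hv : ∀ i j, 0 ≤ v i j) (hρ : ∀ j, 0 ≤ ρ j)
    (k : ℕ) (hk : 1 ≤ k)
    (x' : I × Fin k → Option J)
    (hfeas' : FeasibleOn (fun ic : I × Fin k => v ic.1) ρ x') :
    ∃ x : I → Option J, FeasibleOn v ρ x ∧
      valueOn (fun ic : I × Fin k => v ic.1) x' ≤ 2 * (k : ℝ) ^ 2 * valueOn v x := by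
  classical
  set n := Fintype.card I with hn
  -- value of each copy
  set w : I × Fin k → ℝ := fun s => ((x' s).map (fun j => v s.1 j)).getD 0 with hw
  have hw0 : ∀ s, 0 ≤ w s := by
    intro s
    rw [hw]
    cases hx : x' s <;> simp [hx, hv]
  have hws : ∀ s j, x' s = some j → w s = v s.1 j := by
    intro s j hx
    rw [hw]; simp [hx]
  -- per-buyer sets
  set A : J → Finset (I × Fin k) := fun j => univ.filter (fun s => x' s = some j) with hA
  set P : J → Finset (I × Fin k) := fun j => (A j).filter (fun s => ρ j ≤ w s) with hP
  set N : J → Finset (I × Fin k) := fun j => (A j).filter (fun s => ¬ ρ j ≤ w s) with hN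
  -- assignments of low-value copies to anchors
  have hgex : ∀ j : J, ∃ g : I × Fin k → Option (I × Fin k),
      (∀ s p, g s = some p → s ∈ N j ∧ p ∈ P j) ∧
      (∀ p ∈ P j, ∑ s ∈ (N j).filter (fun s => g s = some p), (ρ j - w s) ≤ w p - ρ j) ∧
      (∑ s ∈ (N j).filter (fun s => g s = none), w s ≤ ∑ p ∈ P j, w p) := by
    intro j
    have hdisj : Disjoint (P j) (N j) := by
      rw [Finset.disjoint_left]
      intro s hs hs'
      exact (Finset.mem_filter.1 hs').2 (Finset.mem_filter.1 hs).2
    have hNlt : ∀ s ∈ N j, w s < ρ j := fun s hs => not_le.1 (Finset.mem_filter.1 hs).2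
    have hPge : ∀ p ∈ P j, ρ j ≤ w p := fun p hp => (Finset.mem_filter.1 hp).2
    have hfj : ρ j * ((A j).card : ℝ) ≤ ∑ s ∈ A j, v s.1 j := hfeas' j
    have e1 : ∑ s ∈ A j, w s = ∑ s ∈ A j, v s.1 j :=
      Finset.sum_congr rfl (fun s hs => hws s j (Finset.mem_filter.1 hs).2)
    have e2 : ∑ s ∈ P j, (w s - ρ j) + ∑ s ∈ N j, (w s - ρ j) = ∑ s ∈ A j, (w s - ρ j) :=
      Finset.sum_filter_add_sum_filter_not (A j) (fun s => ρ j ≤ w s) _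
    have e3 : ∑ s ∈ A j, (w s - ρ j) = ∑ s ∈ A j, w s - ((A j).card : ℝ) * ρ j := by
      rw [Finset.sum_sub_distrib, Finset.sum_const, nsmul_eq_mul]
    have e4 : ∑ s ∈ N j, (ρ j - w s) = - ∑ s ∈ N j, (w s - ρ j) := by
      rw [← Finset.sum_neg_distrib]
      exact Finset.sum_congr rfl (fun s _ => by ring)
    have hbal : ∑ s ∈ N j, (ρ j - w s) ≤ ∑ p ∈ P j, (w p - ρ j) := by
      rw [e4]; linarith [hfj, e1 ▸ e2 ▸ e3]
    exact assign_lemma w (ρ j) (hρ j) (P j) (N j) hdisj hNlt hPge hbal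
  choose g hga hgb hgc using hgex
  -- the global bundling map
  set b : I × Fin k → Option (I × Fin k) := fun s =>
    match x' s with
    | none => none
    | some j => if ρ j ≤ w s then some s else g j s with hb
  have hbnone : ∀ s, x' s = none → b s = none := by
    intro s hx; rw [hb]; simp only [hx]
  have hbx : ∀ s p, b s = some p → ∃ j, x' s = some j := by
    intro s p hbs
    cases hx : x' s with
    | none => rw [hbnone s hx] at hbs; cases hbs
    | some j => exact ⟨j, rfl⟩
  have hbmem : ∀ s p j, b s = some p → x' s = some j →
      x' p = some j ∧ ρ j ≤ w p ∧ (s ≠ p → w s < ρ j) := by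
    intro s p j hbs hx
    rw [hb] at hbs
    simp only [hx] at hbs
    by_cases hle : ρ j ≤ w s
    · rw [if_pos hle] at hbs
      obtain rfl : s = p := Option.some_inj.1 hbs
      exact ⟨hx, hle, fun h => absurd rfl h⟩
    · rw [if_neg hle] at hbs
      obtain ⟨hsN, hpP⟩ := hga j s p hbs
      obtain ⟨hpA, hwp⟩ := Finset.mem_filter.1 hpP
      exact ⟨(Finset.mem_filter.1 hpA).2, hwp, fun _ => not_le.1 hle⟩
  have hbanchor : ∀ s p, b s = some p → b p = some p := by
    intro s p hbs
    obtain ⟨j, hx⟩ := hbx s p hbs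
    obtain ⟨hxp, hwp, -⟩ := hbmem s p j hbs hx
    rw [hb]
    simp only [hxp]
    rw [if_pos hwp]
  -- bundle feasibility
  have hbfeas : ∀ p j, b p = some p → x' p = some j →
      ρ j * ((univ.filter fun s => b s = some p).card : ℝ) ≤
        ∑ s ∈ univ.filter fun s => b s = some p, w s := by
    intro p j hbp hxp
    have hwp : ρ j ≤ w p := (hbmem p p j hbp hxp).2.1
    have hpP : p ∈ P j := Finset.mem_filter.2 ⟨Finset.mem_filter.2 ⟨Finset.mem_univ _, hxp⟩, hwp⟩
    set D := (N j).filter (fun s => g j s = some p) with hD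
    have hset : univ.filter (fun s => b s = some p) = insert p D := by
      ext s
      simp only [Finset.mem_filter, Finset.mem_univ, true_and, Finset.mem_insert]
      constructor
      · intro hbs
        obtain ⟨j', hx'⟩ := hbx s p hbs
        obtain ⟨hxp', -, -⟩ := hbmem s p j' hbs hx'
        have hjj : j' = j := Option.some_inj.1 (hxp'.symm.trans hxp)
        rw [hjj] at hx'
        rw [hb] at hbs
        simp only [hx'] at hbs
        by_cases hle : ρ j ≤ w s
        · rw [if_pos hle] at hbs
          exact Or.inl (Option.some_inj.1 hbs)
        · rw [if_neg hle] at hbs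
          exact Or.inr (Finset.mem_filter.2 ⟨Finset.mem_filter.2
            ⟨Finset.mem_filter.2 ⟨Finset.mem_univ _, hx'⟩, hle⟩, hbs⟩)
      · intro h
        rcases h with rfl | hDmem
        · exact hbp
        · obtain ⟨hsN, hgs⟩ := Finset.mem_filter.1 hDmem
          obtain ⟨hsA, hnle⟩ := Finset.mem_filter.1 hsN
          have hx' : x' s = some j := (Finset.mem_filter.1 hsA).2
          rw [hb]
          simp only [hx']
          rw [if_neg hnle]
          exact hgs
    have hpD : p ∉ D := by
      intro h
      exact (Finset.mem_filter.1 (Finset.mem_filter.1 h).1).2 hwp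
    have hcard : (insert p D).card = D.card + 1 := Finset.card_insert_of_notMem hpD
    have hsumi : ∑ s ∈ insert p D, w s = w p + ∑ s ∈ D, w s := Finset.sum_insert hpD
    have hfit := hgb j p hpP
    have e : ∑ s ∈ D, (ρ j - w s) = (D.card : ℝ) * ρ j - ∑ s ∈ D, w s := by
      rw [Finset.sum_sub_distrib, Finset.sum_const, nsmul_eq_mul, mul_comm]
    rw [hset, hcard, hsumi]
    push_cast
    linarith
  -- kept value is at least half the total
  have hkeptj : ∀ j, ∑ s ∈ A j, w s ≤ 2 * ∑ s ∈ (A j).filter (fun s => b s ≠ none), w s := by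
    intro j
    have e_split : ∑ s ∈ P j, w s + ∑ s ∈ N j, w s = ∑ s ∈ A j, w s :=
      Finset.sum_filter_add_sum_filter_not (A j) (fun s => ρ j ≤ w s) w
    have eN : ∑ s ∈ (N j).filter (fun s => g j s = none), w s
        + ∑ s ∈ (N j).filter (fun s => ¬ g j s = none), w s = ∑ s ∈ N j, w s :=
      Finset.sum_filter_add_sum_filter_not (N j) (fun s => g j s = none) w
    have ekept : (A j).filter (fun s => b s ≠ none)
        = P j ∪ (N j).filter (fun s => ¬ g j s = none) := by
      ext s
      rw [Finset.mem_filter, Finset.mem_union]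
      constructor
      · rintro ⟨hsA, hbs⟩
        have hx : x' s = some j := (Finset.mem_filter.1 hsA).2
        by_cases hle : ρ j ≤ w s
        · exact Or.inl (Finset.mem_filter.2 ⟨hsA, hle⟩)
        · refine Or.inr (Finset.mem_filter.2 ⟨Finset.mem_filter.2 ⟨hsA, hle⟩, ?_⟩)
          intro hg
          apply hbs
          rw [hb]
          simp only [hx]
          rw [if_neg hle]
          exact hg
      · rintro (hsP | hsN)
        · obtain ⟨hsA, hle⟩ := Finset.mem_filter.1 hsP
          have hx : x' s = some j := (Finset.mem_filter.1 hsA).2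
          refine ⟨hsA, ?_⟩
          rw [hb]
          simp only [hx]
          rw [if_pos hle]
          simp
        · obtain ⟨hsN', hg⟩ := Finset.mem_filter.1 hsN
          obtain ⟨hsA, hnle⟩ := Finset.mem_filter.1 hsN'
          have hx : x' s = some j := (Finset.mem_filter.1 hsA).2
          refine ⟨hsA, ?_⟩
          rw [hb]
          simp only [hx]
          rw [if_neg hnle]
          exact hg
    have hdisjPN : Disjoint (P j) ((N j).filter (fun s => ¬ g j s = none)) := by
      rw [Finset.disjoint_left]
      intro s hs hs'
      exact (Finset.mem_filter.1 (Finset.mem_filter.1 hs').1).2 (Finset.mem_filter.1 hs).2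
    have eunion : ∑ s ∈ (A j).filter (fun s => b s ≠ none), w s
        = ∑ s ∈ P j, w s + ∑ s ∈ (N j).filter (fun s => ¬ g j s = none), w s := by
      rw [ekept, Finset.sum_union hdisjPN]
    have hplaced0 : (0:ℝ) ≤ ∑ s ∈ (N j).filter (fun s => ¬ g j s = none), w s :=
      Finset.sum_nonneg (fun s _ => hw0 s)
    have hdrop := hgc j
    linarith
  have hkept : ∑ s, w s ≤ 2 * ∑ s ∈ univ.filter (fun s => b s ≠ none), w s := by
    have hW : ∑ s, w s = ∑ j, ∑ s ∈ A j, w s := by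
      have : ∀ j, ∑ s ∈ A j, w s = ∑ s, (if x' s = some j then w s else 0) := by
        intro j
        rw [hA, Finset.sum_filter]
      rw [Finset.sum_congr rfl (fun j _ => this j), Finset.sum_comm]
      apply Finset.sum_congr rfl
      intro s _
      cases hx : x' s with
      | none =>
        have : w s = 0 := by rw [hw]; simp [hx]
        simp [hx, this]
      | some j₀ => simp [hx]
    have hK : ∑ s ∈ univ.filter (fun s => b s ≠ none), w s
        = ∑ j, ∑ s ∈ (A j).filter (fun s => b s ≠ none), w s := by
      have h1 : ∀ j, ∑ s ∈ (A j).filter (fun s => b s ≠ none), w s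
          = ∑ s, (if x' s = some j then (if b s ≠ none then w s else 0) else 0) := by
        intro j
        rw [Finset.sum_filter, hA, Finset.sum_filter]
      rw [Finset.sum_congr rfl (fun j _ => h1 j), Finset.sum_comm, Finset.sum_filter]
      apply Finset.sum_congr rfl
      intro s _
      cases hx : x' s with
      | none =>
        have hbn : b s = none := hbnone s hx
        simp [hx, hbn]
      | some j₀ => simp [hx]
    rw [hW, hK, Finset.mul_sum]
    exact Finset.sum_le_sum (fun j _ => hkeptj j)
  -- the randomized allocations
  set xf : (I → Fin k) → I → Option J := fun f i =>
    match b (i, f i) with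
    | none => none
    | some p => if f p.1 = p.2 then x' (i, f i) else none with hxf
  have hxfmem : ∀ f i j, xf f i = some j ↔
      ∃ p, b (i, f i) = some p ∧ f p.1 = p.2 ∧ x' (i, f i) = some j := by
    intro f i j
    rw [hxf]
    cases hbi : b (i, f i) with
    | none => simp [hbi]
    | some p =>
      simp only [hbi]
      by_cases hfp : f p.1 = p.2
      · simp [hfp]
      · simp [hfp]
  have hxfeas : ∀ f, FeasibleOn v ρ (xf f) := by
    intro f j
    set Sf := univ.filter (fun i => xf f i = some j) with hSf
    set T := Sf.image (fun i => (i, f i)) with hT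
    have hinj : Function.Injective (fun i : I => (i, f i)) :=
      fun a b h => congrArg Prod.fst h
    have hcardT : T.card = Sf.card := Finset.card_image_of_injective Sf hinj
    have hmemT : ∀ s ∈ T, ∃ p, b s = some p ∧ f p.1 = p.2 ∧ x' s = some j := by
      intro s hs
      obtain ⟨i, hi, rfl⟩ := Finset.mem_image.1 hs
      exact (hxfmem f i j).1 (Finset.mem_filter.1 hi).2
    have hTval : ∀ p ∈ T, x' p = some j := by
      intro p hp
      obtain ⟨q, hbq, hfq, hxq⟩ := hmemT p hp
      exact hxq
    have hclose : ∀ s ∈ T, ∃ p, b s = some p ∧ p ∈ T := by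
      intro s hs
      obtain ⟨p, hbp, hfp, hxs⟩ := hmemT s hs
      refine ⟨p, hbp, ?_⟩
      have hpprod : (p.1, f p.1) = p := by
        rw [hfp]
      have hxp : x' p = some j := (hbmem s p j hbp hxs).1
      have hp1 : p.1 ∈ Sf := by
        rw [hSf, Finset.mem_filter]
        refine ⟨Finset.mem_univ _, (hxfmem f p.1 j).2 ⟨p, ?_, hfp, ?_⟩⟩
        · rw [hpprod]; exact hbanchor s p hbp
        · rw [hpprod]; exact hxp
      exact Finset.mem_image.2 ⟨p.1, hp1, hpprod⟩
    have hfeasT : ρ j * (T.card : ℝ) ≤ ∑ s ∈ T, w s := by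
      apply closure_feas w (ρ j) b T hbanchor
      · intro s p hbs hpT hsnp
        obtain ⟨j', hxs'⟩ := hbx s p hbs
        obtain ⟨hxp', -, hlow'⟩ := hbmem s p j' hbs hxs'
        have : j' = j := Option.some_inj.1 (hxp'.symm.trans (hTval p hpT))
        exact this ▸ hlow' hsnp
      · intro p hpT hbp
        exact hbfeas p j hbp (hTval p hpT)
      · exact hclose
    have hsumT : ∑ s ∈ T, w s = ∑ i ∈ Sf, v i j := by
      rw [hT, Finset.sum_image (fun a _ b _ h => hinj h)]
      apply Finset.sum_congr rfl
      intro i hi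
      obtain ⟨p, hbp, hfp, hxs⟩ := (hxfmem f i j).1 (Finset.mem_filter.1 hi).2
      exact hws (i, f i) j hxs
    rw [hcardT, hsumT] at hfeasT
    exact hfeasT
  -- counting coefficient
  set C : I × Fin k → ℕ := fun s =>
    match b s with
    | none => 0
    | some p => (univ.filter (fun f : I → Fin k => f s.1 = s.2 ∧ f p.1 = p.2)).card with hC
  have hsumval : ∑ f : I → Fin k, valueOn v (xf f) = ∑ s, (C s : ℝ) * w s := by
    set E : (I × Fin k) → (I → Fin k) → ℝ := fun s f =>
      match b s with
      | none => 0
      | some p => if f p.1 = p.2 then w s else 0 with hE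
    have hval : ∀ f, valueOn v (xf f) = ∑ s : I × Fin k, (if f s.1 = s.2 then E s f else 0) := by
      intro f
      have hterm : ∀ i, ((xf f i).map (v i)).getD 0 = E (i, f i) f := by
        intro i
        rw [hxf, hE]
        cases hbi : b (i, f i) with
        | none => simp [hbi]
        | some p =>
          simp only [hbi]
          by_cases hfp : f p.1 = p.2
          · simp only [hfp, if_pos]
            all_goals (rw [hw])
          · simp [hfp]
      have hswap : ∑ s : I × Fin k, (if f s.1 = s.2 then E s f else 0)
          = ∑ i, E (i, f i) f := by
        rw [Fintype.sum_prod_type]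
        apply Finset.sum_congr rfl
        intro i _
        exact Finset.sum_ite_eq univ (f i) (fun c => E (i, c) f) ▸ (by simp)
      rw [hswap, valueOn]
      exact Finset.sum_congr rfl (fun i _ => hterm i)
    rw [Finset.sum_congr rfl (fun f _ => hval f), Finset.sum_comm]
    apply Finset.sum_congr rfl
    intro s _
    cases hbs : b s with
    | none =>
      have : C s = 0 := by rw [hC]; simp [hbs]
      rw [this]
      simp only [Nat.cast_zero, zero_mul]
      apply Finset.sum_eq_zero
      intro f _
      rw [hE]
      simp [hbs]
    | some p =>
      have hCs : C s = (univ.filter (fun f : I → Fin k => f s.1 = s.2 ∧ f p.1 = p.2)).card := by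
        rw [hC]; simp [hbs]
      have : ∀ f : I → Fin k, (if f s.1 = s.2 then E s f else 0)
          = if (f s.1 = s.2 ∧ f p.1 = p.2) then w s else 0 := by
        intro f
        rw [hE]
        simp only [hbs]
        by_cases h1 : f s.1 = s.2 <;> by_cases h2 : f p.1 = p.2 <;> simp [h1, h2]
      rw [Finset.sum_congr rfl (fun f _ => this f)]
      rw [← Finset.sum_filter, Finset.sum_const, hCs, nsmul_eq_mul]
  have hmain : (k : ℝ) ^ n * (∑ s, w s) ≤ 2 * (k : ℝ) ^ 2 * ∑ f : I → Fin k, valueOn v (xf f) := by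
    rw [hsumval]
    set kept := univ.filter (fun s : I × Fin k => b s ≠ none) with hkeptdef
    set anchors := univ.filter (fun p : I × Fin k => b p = some p) with hancdef
    set Bnd : (I × Fin k) → Finset (I × Fin k) :=
      fun p => univ.filter (fun s => b s = some p) with hBnd
    have hdisjB : ∀ x ∈ anchors, ∀ y ∈ anchors, x ≠ y → Disjoint (Bnd x) (Bnd y) := by
      intro x _ y _ hxy
      rw [Finset.disjoint_left]
      intro s hs hs'
      exact hxy (Option.some_inj.1
        ((Finset.mem_filter.1 hs).2 ▸ (Finset.mem_filter.1 hs').2))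
    have hpart : kept = anchors.biUnion Bnd := by
      apply Finset.Subset.antisymm
      · intro s hs
        have hbs := (Finset.mem_filter.1 hs).2
        cases hbs' : b s with
        | none => exact absurd hbs' hbs
        | some p =>
          refine Finset.mem_biUnion.2 ⟨p, ?_, ?_⟩
          · exact Finset.mem_filter.2 ⟨Finset.mem_univ _, hbanchor s p hbs'⟩
          · exact Finset.mem_filter.2 ⟨Finset.mem_univ _, hbs'⟩
      · intro s hs
        obtain ⟨p, -, hsp⟩ := Finset.mem_biUnion.1 hs
        refine Finset.mem_filter.2 ⟨Finset.mem_univ _, ?_⟩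
        rw [(Finset.mem_filter.1 hsp).2]
        simp
    -- per-anchor inequality
    have hanchineq : ∀ p ∈ anchors,
        (k : ℝ) ^ n * ∑ s ∈ Bnd p, w s ≤ (k : ℝ) ^ 2 * ∑ s ∈ Bnd p, (C s : ℝ) * w s := by
      intro p hpanc
      have hbp : b p = some p := (Finset.mem_filter.1 hpanc).2
      obtain ⟨j, hxp⟩ := hbx p p hbp
      have hwp0 : 0 ≤ w p := hw0 p
      set Q := (Bnd p).filter (fun s => s.1 = p.1) with hQ
      set R := (Bnd p).filter (fun s => ¬ s.1 = p.1) with hR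
      have hsplitB : ∑ s ∈ Q, w s + ∑ s ∈ R, w s = ∑ s ∈ Bnd p, w s :=
        Finset.sum_filter_add_sum_filter_not (Bnd p) (fun s => s.1 = p.1) w
      have hsplitC : ∑ s ∈ Q, (C s : ℝ) * w s + ∑ s ∈ R, (C s : ℝ) * w s
          = ∑ s ∈ Bnd p, (C s : ℝ) * w s :=
        Finset.sum_filter_add_sum_filter_not (Bnd p) (fun s => s.1 = p.1) _
      -- values in Q all equal w p
      have hQval : ∀ s ∈ Q, w s = w p := by
        intro s hs
        obtain ⟨hsB, hs1⟩ := Finset.mem_filter.1 hs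
        have hbs : b s = some p := (Finset.mem_filter.1 hsB).2
        obtain ⟨j', hxs⟩ := hbx s p hbs
        have hxpj' : x' p = some j' := (hbmem s p j' hbs hxs).1
        have hjj : j' = j := Option.some_inj.1 (hxpj'.symm.trans hxp)
        rw [hws s j (hjj ▸ hxs), hws p j hxp, hs1]
      have hQcard : (Q.card : ℝ) ≤ (k : ℝ) := by
        have : Q.card ≤ k := by
          have h1 : Q.card ≤ (univ : Finset (Fin k)).card := by
            apply Finset.card_le_card_of_injOn (fun s => s.2) (fun s _ => Finset.mem_univ _)
            intro s hs t ht h2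
            have e1 : s.1 = p.1 := (Finset.mem_filter.1 hs).2
            have e2 : t.1 = p.1 := (Finset.mem_filter.1 ht).2
            exact Prod.ext (e1.trans e2.symm) h2
          simpa using h1
        exact_mod_cast this
      have hQsum : ∑ s ∈ Q, w s ≤ (k : ℝ) * w p := by
        rw [Finset.sum_congr rfl hQval, Finset.sum_const, nsmul_eq_mul]
        exact mul_le_mul_of_nonneg_right hQcard hwp0
      -- counting facts
      have hpQ : p ∈ Q := by
        refine Finset.mem_filter.2 ⟨Finset.mem_filter.2 ⟨Finset.mem_univ _, hbp⟩, rfl⟩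
      have hCp : (C p : ℝ) * (k : ℝ) = (k : ℝ) ^ n := by
        have e1 : C p = (univ.filter (fun f : I → Fin k => f p.1 = p.2 ∧ f p.1 = p.2)).card := by
          rw [hC]; simp [hbp]
        have e2 : (univ.filter (fun f : I → Fin k => f p.1 = p.2 ∧ f p.1 = p.2))
            = (univ.filter (fun f : I → Fin k => f p.1 = p.2)) := by
          apply Finset.filter_congr
          intro f _
          simp
        have e3 := fiber1_card k p.1 p.2
        rw [e1, e2]
        exact_mod_cast e3
      have hCR : ∀ s ∈ R, (C s : ℝ) * ((k:ℝ) * (k:ℝ)) = (k : ℝ) ^ n := by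
        intro s hs
        obtain ⟨hsB, hs1⟩ := Finset.mem_filter.1 hs
        have hbs : b s = some p := (Finset.mem_filter.1 hsB).2
        have e1 : C s = (univ.filter
            (fun f : I → Fin k => f s.1 = s.2 ∧ f p.1 = p.2)).card := by
          rw [hC]; simp [hbs]
        have e3 := fiber2_card k s.1 p.1 hs1 s.2 p.2
        rw [e1]
        exact_mod_cast e3
      -- assemble
      have hQC : (C p : ℝ) * w p ≤ ∑ s ∈ Q, (C s : ℝ) * w s := by
        apply Finset.single_le_sum (f := fun s => (C s : ℝ) * w s)
          (fun s _ => mul_nonneg (Nat.cast_nonneg _) (hw0 s)) hpQ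
      have hRC : ∑ s ∈ R, (k : ℝ) ^ n * w s = (k : ℝ) ^ 2 * ∑ s ∈ R, (C s : ℝ) * w s := by
        rw [Finset.mul_sum]
        apply Finset.sum_congr rfl
        intro s hs
        rw [← hCR s hs]
        ring
      have hk0 : (0:ℝ) ≤ (k : ℝ) ^ n := by positivity
      calc (k : ℝ) ^ n * ∑ s ∈ Bnd p, w s
          ≤ (k : ℝ) ^ n * ((k : ℝ) * w p + ∑ s ∈ R, w s) := by
            apply mul_le_mul_of_nonneg_left _ hk0
            linarith [hQsum, hsplitB]
        _ = (k : ℝ) ^ 2 * ((C p : ℝ) * w p) + ∑ s ∈ R, (k : ℝ) ^ n * w s := by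
            rw [mul_add, Finset.mul_sum]
            congr 1
            rw [← hCp]
            ring
        _ ≤ (k : ℝ) ^ 2 * ∑ s ∈ Q, (C s : ℝ) * w s + (k : ℝ) ^ 2 * ∑ s ∈ R, (C s : ℝ) * w s := by
            rw [hRC]
            have := mul_le_mul_of_nonneg_left hQC (by positivity : (0:ℝ) ≤ (k:ℝ)^2)
            linarith
        _ = (k : ℝ) ^ 2 * ∑ s ∈ Bnd p, (C s : ℝ) * w s := by
            rw [← hsplitC]; ring
    -- sum over anchors
    have hKsum : ∑ s ∈ kept, w s = ∑ p ∈ anchors, ∑ s ∈ Bnd p, w s := by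
      conv_lhs => rw [hpart]
      exact Finset.sum_biUnion (fun x hx y hy hxy => hdisjB x hx y hy hxy)
    have hKCsum : ∑ s ∈ kept, (C s : ℝ) * w s = ∑ p ∈ anchors, ∑ s ∈ Bnd p, (C s : ℝ) * w s := by
      conv_lhs => rw [hpart]
      exact Finset.sum_biUnion (fun x hx y hy hxy => hdisjB x hx y hy hxy)
    have hCuniv : ∑ s ∈ kept, (C s : ℝ) * w s ≤ ∑ s, (C s : ℝ) * w s := by
      apply Finset.sum_le_sum_of_subset_of_nonneg (Finset.filter_subset _ _)
      intro s _ _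
      exact mul_nonneg (Nat.cast_nonneg _) (hw0 s)
    have hstep : (k : ℝ) ^ n * ∑ s ∈ kept, w s ≤ (k : ℝ) ^ 2 * ∑ s ∈ kept, (C s : ℝ) * w s := by
      rw [hKsum, hKCsum, Finset.mul_sum, Finset.mul_sum]
      exact Finset.sum_le_sum hanchineq
    have hk0 : (0:ℝ) ≤ (k : ℝ) ^ n := by positivity
    have hk2 : (0:ℝ) ≤ (k : ℝ) ^ 2 := by positivity
    calc (k : ℝ) ^ n * ∑ s, w s
        ≤ (k : ℝ) ^ n * (2 * ∑ s ∈ kept, w s) := mul_le_mul_of_nonneg_left hkept hk0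
      _ = 2 * ((k : ℝ) ^ n * ∑ s ∈ kept, w s) := by ring
      _ ≤ 2 * ((k : ℝ) ^ 2 * ∑ s ∈ kept, (C s : ℝ) * w s) := by linarith [hstep]
      _ ≤ 2 * ((k : ℝ) ^ 2 * ∑ s, (C s : ℝ) * w s) := by
          have := mul_le_mul_of_nonneg_left hCuniv hk2
          linarith
      _ = 2 * (k : ℝ) ^ 2 * ∑ s, (C s : ℝ) * w s := by ring
  -- conclude
  have hWdef : valueOn (fun ic : I × Fin k => v ic.1) x' = ∑ s, w s := rfl
  have hne : (univ : Finset (I → Fin k)).Nonempty := ⟨fun _ => ⟨0, hk⟩, mem_univ _⟩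
  have hsum_le : ∑ _f : I → Fin k, valueOn (fun ic : I × Fin k => v ic.1) x' ≤
      ∑ f : I → Fin k, 2 * (k : ℝ) ^ 2 * valueOn v (xf f) := by
    rw [Finset.sum_const, Finset.card_univ, Fintype.card_fun, Fintype.card_fin,
      nsmul_eq_mul, hWdef]
    push_cast
    rw [← Finset.mul_sum]
    calc (k : ℝ) ^ n * ∑ s, w s ≤ 2 * (k : ℝ) ^ 2 * ∑ f : I → Fin k, valueOn v (xf f) := hmain
      _ = _ := rfl
  obtain ⟨f, _, hf⟩ := Finset.exists_le_of_sum_le hne hsum_le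
  exact ⟨xf f, hxfeas f, hf⟩
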